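/- Fix α > 0 and r ≥ 0. Let (β_t)_{t≥0} be an (F_t)-Brownian motion started from 0 on a filtered probability space, and suppose (R¹_t)_{t≥0} and (R²_t)_{t≥0} are two continuous nonnegative (F_t)-adapted processes, each satisfying: R^i_0 = r, R^i_t = r + β_t − α∫₀^t (R^i_s)^{−1} ds for all 0 ≤ t ≤ T^i := inf{t ≥ 0 : R^i_t = 0}, and R^i_t = 0 for all t ≥ T^i. Then almost surely R¹_t = R²_t for all t ≥ 0 (pathwise uniqueness for the absorbed Bessel stochastic differential equation dR = dβ − (α/R) dt). -/

import Mathlib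

open MeasureTheory ProbabilityTheory Filter Set
open scoped NNReal ENNReal

noncomputable section

/-- The first hitting time of the level `c` by the path `t ↦ X t ω`, with values in
`ℝ≥0∞` (`∞` if the level is never hit). -/
def hitTimeE {Ω : Type*} (X : ℝ≥0 → Ω → ℝ) (c : ℝ) (ω : Ω) : ℝ≥0∞ :=
  sInf {t : ℝ≥0∞ | ∃ s : ℝ≥0, (s : ℝ≥0∞) = t ∧ X s ω = c}

/-- The path `t ↦ X t ω` stopped at the (possibly infinite) time `T ω`. -/
def stopE {Ω : Type*} (X : ℝ≥0 → Ω → ℝ) (T : Ω → ℝ≥0∞) (ω : Ω) : ℝ≥0 → ℝ :=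
  fun t => X ((min (t : ℝ≥0∞) (T ω)).toNNReal) ω

/-- The time integral `∫₀ᵗ g(X_s) ds` along the path `t ↦ X t ω`. -/
def pInt {Ω : Type*} (X : ℝ≥0 → Ω → ℝ) (g : ℝ → ℝ) (t : ℝ≥0) (ω : Ω) : ℝ :=
  ∫ s in (0:ℝ)..(t:ℝ), g (X s.toNNReal ω)

/-- The time integral `∫₀^{T ω} g(X_s) ds` along the path `t ↦ X t ω`, as an
`ℝ≥0∞`-valued integral; the upper limit `T ω` may be infinite. -/
def upIntE {Ω : Type*} (X : ℝ≥0 → Ω → ℝ) (g : ℝ → ℝ) (T : Ω → ℝ≥0∞) (ω : Ω) : ℝ≥0∞ :=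
  ∫⁻ t in {t : ℝ | 0 ≤ t ∧ ENNReal.ofReal t ≤ T ω}, ENNReal.ofReal (g (X t.toNNReal ω))

/-- `exp (-x)` for `x ∈ [0,∞]`, with the convention `exp (-∞) = 0`. -/
def expNeg (x : ℝ≥0∞) : ℝ := if x = ⊤ then 0 else Real.exp (-x.toReal)

/-- `exp (-x)` for `x ∈ [0,∞]`, as an element of `ℝ≥0∞`. -/
def expNegE (x : ℝ≥0∞) : ℝ≥0∞ := ENNReal.ofReal (expNeg x)

/-- A standard one-dimensional Brownian motion `B` started from `r` under `P`:
a continuous process with `B 0 = r` whose increments are independent centered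
Gaussians with variance the time increment. -/
structure IsBrownianMotion {Ω : Type*} [MeasurableSpace Ω]
    (P : Measure Ω) (B : ℝ≥0 → Ω → ℝ) (r : ℝ) : Prop where
  isProb : IsProbabilityMeasure P
  meas : ∀ t, Measurable (B t)
  init : ∀ ω, B 0 ω = r
  cont : ∀ ω, Continuous fun t => B t ω
  gauss : ∀ s t : ℝ≥0, s ≤ t →
    P.map (fun ω => B t ω - B s ω) = gaussianReal 0 (t - s)
  indep : ∀ (n : ℕ) (u : Fin (n + 1) → ℝ≥0), Monotone u →
    iIndepFun
      (fun i : Fin n => fun ω => B (u i.succ) ω - B (u i.castSucc) ω) P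

/-- An `(F_t)`-Brownian motion started from `r`: a Brownian motion adapted to `F`
whose increments after time `s` are independent of `F s`. -/
structure IsBMFiltered {Ω : Type*} {mΩ : MeasurableSpace Ω}
    (P : Measure Ω) (F : Filtration ℝ≥0 mΩ) (B : ℝ≥0 → Ω → ℝ) (r : ℝ) : Prop where
  toBM : IsBrownianMotion P B r
  adapted : Adapted F B
  indepPast : ∀ s t : ℝ≥0, s ≤ t →
    Indep (MeasurableSpace.comap (fun ω => B t ω - B s ω) (borel ℝ)) (F s) P

/-- A Bessel process of dimension `1 - 2 * α` started from `r`, absorbed at `0`,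
driven by the `(F_t)`-Brownian motion `β` (with `β 0 = 0`): a continuous nonnegative
adapted process `R` with `R 0 = r` satisfying
`R t = r + β t - α * ∫₀ᵗ (R s)⁻¹ ds` for all `0 ≤ t ≤ T := inf {t | R t = 0}`
(encoded by the condition `∀ s < t, R s ≠ 0`), and `R t = 0` for `t ≥ T`
(encoded by: `0` is absorbing). -/
structure IsBesselF {Ω : Type*} {mΩ : MeasurableSpace Ω}
    (P : Measure Ω) (F : Filtration ℝ≥0 mΩ) (β : ℝ≥0 → Ω → ℝ)
    (α r : ℝ) (R : ℝ≥0 → Ω → ℝ) : Prop where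
  bm : IsBMFiltered P F β 0
  adapted : Adapted F R
  cont : ∀ ω, Continuous fun t => R t ω
  nonneg : ∀ ω, ∀ t, 0 ≤ R t ω
  init : ∀ ω, R 0 ω = r
  sde : ∀ ω, ∀ t : ℝ≥0, (∀ s, s < t → R s ω ≠ 0) →
    R t ω = r + β t ω - α * pInt R (fun x => x⁻¹) t ω
  absorbed : ∀ ω, ∀ s t : ℝ≥0, s ≤ t → R s ω = 0 → R t ω = 0

/-- A Bessel process of dimension `1 - 2 * α` started from `r`, absorbed at `0`:
there exist a filtration and a driving Brownian motion as in `IsBesselF`. -/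
def IsBessel {Ω : Type*} [mΩ : MeasurableSpace Ω] (P : Measure Ω)
    (α r : ℝ) (R : ℝ≥0 → Ω → ℝ) : Prop :=
  ∃ (F : Filtration ℝ≥0 mΩ) (β : ℝ≥0 → Ω → ℝ), IsBesselF P F β α r R

-- Auxiliary lemmas ------------------------------------------------------


lemma gronwall_aux {α : ℝ} (hα : 0 < α) {f g : ℝ → ℝ} {b : ℝ}
    (hf : Continuous f) (hg : Continuous g)
    (hfpos : ∀ s ∈ Set.Icc (0:ℝ) b, 0 < f s)
    (hgpos : ∀ s ∈ Set.Icc (0:ℝ) b, 0 < g s)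
    (heq : ∀ t ∈ Set.Icc (0:ℝ) b,
      f t - g t = -α * ((∫ s in (0:ℝ)..t, (f s)⁻¹) - ∫ s in (0:ℝ)..t, (g s)⁻¹)) :
    ∀ t ∈ Set.Icc (0:ℝ) b, f t = g t := by
  rcases lt_or_ge b 0 with hb | hb
  · intro t ht; exact absurd (ht.1.trans ht.2) (not_le.2 hb)
  obtain ⟨xf, hxf, hminf⟩ := isCompact_Icc.exists_isMinOn (nonempty_Icc.2 hb) hf.continuousOn
  obtain ⟨xg, hxg, hming⟩ := isCompact_Icc.exists_isMinOn (nonempty_Icc.2 hb) hg.continuousOn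
  set m : ℝ := min (f xf) (g xg) with hm_def
  have hm : 0 < m := lt_min (hfpos _ hxf) (hgpos _ hxg)
  have hmf : ∀ s ∈ Set.Icc (0:ℝ) b, m ≤ f s := fun s hs =>
    (min_le_left _ _).trans (hminf hs)
  have hmg : ∀ s ∈ Set.Icc (0:ℝ) b, m ≤ g s := fun s hs =>
    (min_le_right _ _).trans (hming hs)
  set Fm : ℝ → ℝ := fun s => max (f s) m with hFm_def
  set Gm : ℝ → ℝ := fun s => max (g s) m with hGm_def
  have hFmc : Continuous Fm := hf.max continuous_const
  have hGmc : Continuous Gm := hg.max continuous_const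
  have hFmpos : ∀ s, 0 < Fm s := fun s => hm.trans_le (le_max_right _ _)
  have hGmpos : ∀ s, 0 < Gm s := fun s => hm.trans_le (le_max_right _ _)
  set φ : ℝ → ℝ := fun s => (Fm s)⁻¹ - (Gm s)⁻¹ with hφ_def
  have hφc : Continuous φ :=
    (hFmc.inv₀ fun s => (hFmpos s).ne').sub (hGmc.inv₀ fun s => (hGmpos s).ne')
  set H : ℝ → ℝ := fun t => -α * ∫ s in (0:ℝ)..t, φ s with hH_def
  have hFm_eq : ∀ s ∈ Set.Icc (0:ℝ) b, Fm s = f s := fun s hs => max_eq_left (hmf s hs)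
  have hGm_eq : ∀ s ∈ Set.Icc (0:ℝ) b, Gm s = g s := fun s hs => max_eq_left (hmg s hs)
  -- H agrees with f - g on [0, b]
  have hHeq : ∀ t ∈ Set.Icc (0:ℝ) b, H t = f t - g t := by
    intro t ht
    have hsub : Set.uIcc (0:ℝ) t ⊆ Set.Icc (0:ℝ) b := by
      rw [Set.uIcc_of_le ht.1]
      exact Set.Icc_subset_Icc le_rfl ht.2
    have h1 : (∫ s in (0:ℝ)..t, (Fm s)⁻¹) = ∫ s in (0:ℝ)..t, (f s)⁻¹ :=
      intervalIntegral.integral_congr fun s hs => by rw [hFm_eq s (hsub hs)]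
    have h2 : (∫ s in (0:ℝ)..t, (Gm s)⁻¹) = ∫ s in (0:ℝ)..t, (g s)⁻¹ :=
      intervalIntegral.integral_congr fun s hs => by rw [hGm_eq s (hsub hs)]
    have h3 : (∫ s in (0:ℝ)..t, φ s)
        = (∫ s in (0:ℝ)..t, (Fm s)⁻¹) - ∫ s in (0:ℝ)..t, (Gm s)⁻¹ :=
      intervalIntegral.integral_sub
        ((hFmc.inv₀ fun s => (hFmpos s).ne').intervalIntegrable _ _)
        ((hGmc.inv₀ fun s => (hGmpos s).ne').intervalIntegrable _ _)
    rw [hH_def]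
    simp only
    rw [h3, h1, h2, ← heq t ht]
  have hHderiv : ∀ t : ℝ, HasDerivAt H (-α * φ t) t := by
    intro t
    exact (intervalIntegral.integral_hasDerivAt_right (hφc.intervalIntegrable _ _)
      (hφc.stronglyMeasurableAtFilter _ _) hφc.continuousAt).const_mul (-α)
  set K : ℝ := α * (m * m)⁻¹ with hK_def
  have hbound : ∀ t ∈ Set.Ico (0:ℝ) b, ‖-α * φ t‖ ≤ K * ‖H t‖ + 0 := by
    intro t ht
    have ht' : t ∈ Set.Icc (0:ℝ) b := ⟨ht.1, ht.2.le⟩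
    have hft := hfpos t ht'
    have hgt := hgpos t ht'
    have hφt : φ t = (f t)⁻¹ - (g t)⁻¹ := by
      rw [hφ_def]; simp only; rw [hFm_eq t ht', hGm_eq t ht']
    have hφt2 : φ t = (g t - f t) / (f t * g t) := by
      rw [hφt]; field_simp
    rw [hHeq t ht', hφt2, add_zero, norm_mul, norm_neg, Real.norm_eq_abs,
      Real.norm_eq_abs, abs_of_pos hα, abs_div,
      abs_of_pos (by positivity : (0:ℝ) < f t * g t), abs_sub_comm (g t)]
    have hmm : m * m ≤ f t * g t := mul_le_mul (hmf t ht') (hmg t ht') hm.le hft.le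
    have h4 : |f t - g t| / (f t * g t) ≤ |f t - g t| * (m * m)⁻¹ := by
      rw [div_eq_mul_inv]
      exact mul_le_mul_of_nonneg_left (inv_anti₀ (by positivity) hmm) (abs_nonneg _)
    calc α * (|f t - g t| / (f t * g t)) ≤ α * (|f t - g t| * (m * m)⁻¹) :=
          mul_le_mul_of_nonneg_left h4 hα.le
      _ = K * |f t - g t| := by rw [hK_def]; ring
  have hH0 : H 0 = 0 := by rw [hH_def]; simp
  have hHcont : Continuous H := continuous_iff_continuousAt.2 fun t => (hHderiv t).continuousAt
  have hgr := norm_le_gronwallBound_of_norm_deriv_right_le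
    (f := H) (f' := fun t => -α * φ t) (δ := 0) (K := K) (ε := 0) (a := 0) (b := b)
    hHcont.continuousOn (fun t _ => (hHderiv t).hasDerivWithinAt)
    (by rw [hH0]; simp) hbound
  intro t ht
  have h0 := hgr t ht
  rw [gronwallBound_ε0_δ0] at h0
  have hH0' : H t = 0 := by
    have h1 := norm_nonneg (H t)
    have : ‖H t‖ = 0 := le_antisymm h0 h1
    simpa using this
  have h2 := hHeq t ht
  linarith [h2 ▸ hH0']

open scoped NNReal

theorem main_test {Ω : Type*} {mΩ : MeasurableSpace Ω} {P : Measure Ω}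
    {F : MeasureTheory.Filtration ℝ≥0 mΩ} {β : ℝ≥0 → Ω → ℝ} {α r : ℝ}
    (hα : 0 < α) (hr : 0 ≤ r)
    {R₁ R₂ : ℝ≥0 → Ω → ℝ}
    (h₁cont : ∀ ω, Continuous fun t => R₁ t ω)
    (h₂cont : ∀ ω, Continuous fun t => R₂ t ω)
    (h₁nonneg : ∀ ω, ∀ t, 0 ≤ R₁ t ω) (h₂nonneg : ∀ ω, ∀ t, 0 ≤ R₂ t ω)
    (h₁init : ∀ ω, R₁ 0 ω = r) (h₂init : ∀ ω, R₂ 0 ω = r)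
    (h₁sde : ∀ ω, ∀ t : ℝ≥0, (∀ s, s < t → R₁ s ω ≠ 0) →
      R₁ t ω = r + β t ω - α * ∫ s in (0:ℝ)..(t:ℝ), (R₁ s.toNNReal ω)⁻¹)
    (h₂sde : ∀ ω, ∀ t : ℝ≥0, (∀ s, s < t → R₂ s ω ≠ 0) →
      R₂ t ω = r + β t ω - α * ∫ s in (0:ℝ)..(t:ℝ), (R₂ s.toNNReal ω)⁻¹)
    (h₁abs : ∀ ω, ∀ s t : ℝ≥0, s ≤ t → R₁ s ω = 0 → R₁ t ω = 0)
    (h₂abs : ∀ ω, ∀ s t : ℝ≥0, s ≤ t → R₂ s ω = 0 → R₂ t ω = 0)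
    (ω : Ω) : ∀ t, R₁ t ω = R₂ t ω := by
  set f : ℝ → ℝ := fun s => R₁ s.toNNReal ω with hfdef
  set g : ℝ → ℝ := fun s => R₂ s.toNNReal ω with hgdef
  have hfc : Continuous f := (h₁cont ω).comp continuous_real_toNNReal
  have hgc : Continuous g := (h₂cont ω).comp continuous_real_toNNReal
  suffices hkey : ∀ t : ℝ, 0 ≤ t → f t = g t by
    intro t
    have := hkey (t : ℝ) t.coe_nonneg
    simpa [hfdef, hgdef, Real.toNNReal_coe] using this
  by_contra hcon
  push_neg at hcon
  obtain ⟨t₀, ht₀0, ht₀⟩ := hcon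
  set B : Set ℝ := {t | 0 ≤ t ∧ f t ≠ g t} with hBdef
  have hBne : B.Nonempty := ⟨t₀, ht₀0, ht₀⟩
  have hBbd : BddBelow B := ⟨0, fun x hx => hx.1⟩
  set t₁ : ℝ := sInf B with ht₁def
  have ht₁0 : 0 ≤ t₁ := le_csInf hBne fun x hx => hx.1
  have hlt : ∀ s, 0 ≤ s → s < t₁ → f s = g s := by
    intro s hs0 hst
    by_contra hne
    exact absurd (csInf_le hBbd ⟨hs0, hne⟩) (not_le.2 hst)
  have ht₁eq : f t₁ = g t₁ := by
    rcases eq_or_lt_of_le ht₁0 with h0 | h0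
    · rw [← h0]
      show R₁ (0:ℝ).toNNReal ω = R₂ (0:ℝ).toNNReal ω
      rw [Real.toNNReal_zero, h₁init ω, h₂init ω]
    · have hclos : t₁ ∈ closure (Set.Ico 0 t₁) := by
        rw [closure_Ico h0.ne]; exact ⟨ht₁0, le_rfl⟩
      have hsubset : Set.Ico 0 t₁ ⊆ {x | f x = g x} := fun s hs => hlt s hs.1 hs.2
      exact (isClosed_eq hfc hgc).closure_subset ((closure_mono hsubset) hclos)
  have hfnn : 0 ≤ f t₁ := h₁nonneg ω _
  rcases hfnn.eq_or_lt with hzero | hpos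
  · -- absorbed case
    have ht₁t₀ : t₁ ≤ t₀ := csInf_le hBbd ⟨ht₀0, ht₀⟩
    have h1 : R₁ t₀.toNNReal ω = 0 :=
      h₁abs ω t₁.toNNReal t₀.toNNReal (Real.toNNReal_mono ht₁t₀) hzero.symm
    have h2 : R₂ t₀.toNNReal ω = 0 :=
      h₂abs ω t₁.toNNReal t₀.toNNReal (Real.toNNReal_mono ht₁t₀)
        (by rw [show R₂ t₁.toNNReal ω = g t₁ from rfl, ← ht₁eq]; exact hzero.symm)
    exact ht₀ (h1.trans h2.symm)
  · have hpos' : 0 < g t₁ := ht₁eq ▸ hpos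
    have e1 : ∀ᶠ s in nhds t₁, 0 < f s := (hfc.tendsto t₁).eventually (eventually_gt_nhds hpos)
    have e2 : ∀ᶠ s in nhds t₁, 0 < g s := (hgc.tendsto t₁).eventually (eventually_gt_nhds hpos')
    obtain ⟨ε, hε, hball⟩ := Metric.eventually_nhds_iff.1 (e1.and e2)
    set b : ℝ := t₁ + ε/2 with hbdef
    have hnear : ∀ s, t₁ < s → s ≤ b → 0 < f s ∧ 0 < g s := by
      intro s h1 h2
      rw [hbdef] at h2
      apply hball
      rw [Real.dist_eq, abs_of_pos (by linarith)]
      linarith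
    have hfposI : ∀ s ∈ Set.Icc (0:ℝ) b, 0 < f s := by
      intro s hs
      rcases le_or_gt s t₁ with h | h
      · rcases (h₁nonneg ω s.toNNReal).eq_or_lt with he | hl
        · exact absurd (h₁abs ω s.toNNReal t₁.toNNReal (Real.toNNReal_mono h) he.symm)
            (ne_of_gt hpos)
        · exact hl
      · exact (hnear s h hs.2).1
    have hgposI : ∀ s ∈ Set.Icc (0:ℝ) b, 0 < g s := by
      intro s hs
      rcases le_or_gt s t₁ with h | h
      · rcases (h₂nonneg ω s.toNNReal).eq_or_lt with he | hl
        · exact absurd (h₂abs ω s.toNNReal t₁.toNNReal (Real.toNNReal_mono h) he.symm)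
            (ne_of_gt hpos')
        · exact hl
      · exact (hnear s h hs.2).2
    have heq : ∀ t ∈ Set.Icc (0:ℝ) b,
        f t - g t = -α * ((∫ s in (0:ℝ)..t, (f s)⁻¹) - ∫ s in (0:ℝ)..t, (g s)⁻¹) := by
      intro t ht
      have hct : (t.toNNReal : ℝ) = t := Real.coe_toNNReal t ht.1
      have hc1 : ∀ s : ℝ≥0, s < t.toNNReal → R₁ s ω ≠ 0 := by
        intro s hs
        have hsb : (s:ℝ) ∈ Set.Icc (0:ℝ) b := by
          refine ⟨s.coe_nonneg, ?_⟩
          have : (s:ℝ) < (t.toNNReal : ℝ) := NNReal.coe_lt_coe.2 hs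
          rw [hct] at this
          exact this.le.trans ht.2
        have := hfposI _ hsb
        simpa [hfdef, Real.toNNReal_coe] using this.ne'
      have hc2 : ∀ s : ℝ≥0, s < t.toNNReal → R₂ s ω ≠ 0 := by
        intro s hs
        have hsb : (s:ℝ) ∈ Set.Icc (0:ℝ) b := by
          refine ⟨s.coe_nonneg, ?_⟩
          have : (s:ℝ) < (t.toNNReal : ℝ) := NNReal.coe_lt_coe.2 hs
          rw [hct] at this
          exact this.le.trans ht.2
        have := hgposI _ hsb
        simpa [hgdef, Real.toNNReal_coe] using this.ne'
      have e1' : f t = r + β t.toNNReal ω - α * ∫ s in (0:ℝ)..t, (f s)⁻¹ := by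
        have := h₁sde ω t.toNNReal hc1
        rw [hct] at this
        exact this
      have e2' : g t = r + β t.toNNReal ω - α * ∫ s in (0:ℝ)..t, (g s)⁻¹ := by
        have := h₂sde ω t.toNNReal hc2
        rw [hct] at this
        exact this
      rw [e1', e2']; ring
    have hall := gronwall_aux hα hfc hgc hfposI hgposI heq
    have htb : t₁ < b := by rw [hbdef]; linarith
    obtain ⟨x, hxB, hxb⟩ := exists_lt_of_csInf_lt hBne htb
    exact hxB.2 (hall x ⟨hxB.1, hxb.le⟩)


/-- pathwise uniqueness for the absorbed Bessel SDE
`dR = dβ - (α/R) dt`: two solutions driven by the same `(F_t)`-Brownian motion `β`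
and started from the same point `r` coincide almost surely. -/
theorem statement7 {Ω : Type*} {mΩ : MeasurableSpace Ω} {P : Measure Ω}
    {F : Filtration ℝ≥0 mΩ} {β : ℝ≥0 → Ω → ℝ} {α r : ℝ}
    (hα : 0 < α) (hr : 0 ≤ r)
    {R₁ R₂ : ℝ≥0 → Ω → ℝ}
    (h₁ : IsBesselF P F β α r R₁) (h₂ : IsBesselF P F β α r R₂) :
    ∀ᵐ ω ∂P, ∀ t, R₁ t ω = R₂ t ω := by
  refine MeasureTheory.ae_of_all _ (main_test (P := P) (F := F) (β := β) hα hr h₁.cont h₂.cont h₁.nonneg h₂.nonneg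
    h₁.init h₂.init ?_ ?_ h₁.absorbed h₂.absorbed)
  · intro ω t h
    simpa [pInt] using h₁.sde ω t h
  · intro ω t h
    simpa [pInt] using h₂.sde ω t h

end
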